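/- Let F be a linearly ordered field, A and B magnitudes of F, and b ∈ F. Then the set b • A + A * B (Minkowski operations) is itself a magnitude of F, i.e. an order-convex additive subgroup of F; in particular, the product of a magnitude with a coset is a magnitude. -/

import Mathlib

open Pointwise

/-- A *magnitude* of a linearly ordered field `F` is an order-convex additive subgroup of `F`,
given as a set: it contains `0`, is closed under addition and negation, and is order-convex. -/
def IsMagnitude {F : Type*} [Field F] [LinearOrder F] [IsStrictOrderedRing F] (A : Set F) : Prop :=
  (0 : F) ∈ A ∧ (∀ x ∈ A, ∀ y ∈ A, x + y ∈ A) ∧ (∀ x ∈ A, -x ∈ A) ∧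
    (∀ x ∈ A, ∀ y ∈ A, ∀ z : F, x ≤ z → z ≤ y → z ∈ A)

/-- Order relation on subsets of `F`: `S ≤ T` iff every element of `S` is below some element of `T`. -/
def SetLE {F : Type*} [Field F] [LinearOrder F] [IsStrictOrderedRing F] (S T : Set F) : Prop :=
  ∀ x ∈ S, ∃ y ∈ T, x ≤ y

section aux
variable {F : Type*} [Field F] [LinearOrder F] [IsStrictOrderedRing F]

lemma mag_abs {A : Set F} (hA : IsMagnitude A) {x : F} (hx : x ∈ A) : |x| ∈ A := by
  rcases abs_cases x with ⟨h, _⟩ | ⟨h, _⟩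
  · rwa [h]
  · rw [h]; exact hA.2.2.1 x hx

lemma mag_sub {A : Set F} (hA : IsMagnitude A) {x y : F} (hx : x ∈ A) (hy : y ∈ A) :
    x - y ∈ A := by
  have := hA.2.1 x hx (-y) (hA.2.2.1 y hy)
  simpa [sub_eq_add_neg] using this

lemma smul_mag {A : Set F} (hA : IsMagnitude A) (b : F) : IsMagnitude (b • A) := by
  obtain ⟨h0, hadd, hneg, hconv⟩ := hA
  refine ⟨⟨0, h0, by simp⟩, ?_, ?_, ?_⟩
  · rintro _ ⟨a1, ha1, rfl⟩ _ ⟨a2, ha2, rfl⟩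
    exact ⟨a1 + a2, hadd a1 ha1 a2 ha2, by simp [mul_add]⟩
  · rintro _ ⟨a, ha, rfl⟩
    exact ⟨-a, hneg a ha, by simp⟩
  · rintro _ ⟨a1, ha1, rfl⟩ _ ⟨a2, ha2, rfl⟩ z h1 h2
    rcases eq_or_ne b 0 with rfl | hb
    · simp only [smul_eq_mul, zero_mul] at h1 h2
      exact ⟨0, h0, by simp [le_antisymm h2 h1]⟩
    · have hz : b * (z / b) = z := by field_simp
      refine ⟨z / b, ?_, by simpa using hz⟩
      simp only [smul_eq_mul] at h1 h2
      rcases lt_or_gt_of_ne hb with hb' | hb'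
      · refine hconv a2 ha2 a1 ha1 _ ?_ ?_ <;> nlinarith [hz]
      · refine hconv a1 ha1 a2 ha2 _ ?_ ?_ <;> nlinarith [hz]

lemma mul_mag {A B : Set F} (hA : IsMagnitude A) (hB : IsMagnitude B) :
    IsMagnitude (A * B) := by
  have key : ∀ a ∈ A, ∀ c ∈ B, ∀ z : F, -(a * c) ≤ z → z ≤ a * c → z ∈ A * B := by
    intro a ha c hc z h1 h2
    rcases eq_or_ne c 0 with rfl | hc0
    · simp only [mul_zero] at h1 h2
      refine ⟨0, hA.1, 0, hB.1, ?_⟩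
      simp; linarith
    · have hcpos : 0 < |c| := abs_pos.mpr hc0
      have hz : (z / |c|) * |c| = z := by field_simp
      refine ⟨z / |c|, ?_, |c|, mag_abs hB hc, hz⟩
      have hac : 0 ≤ a * c := by nlinarith
      have habs : |a| * |c| = a * c := by rw [← abs_mul, abs_of_nonneg hac]
      refine hA.2.2.2 (-|a|) (hA.2.2.1 _ (mag_abs hA ha)) (|a|) (mag_abs hA ha) _ ?_ ?_ <;>
        nlinarith [hz]
  have bound : ∀ a1 ∈ A, ∀ c1 ∈ B, ∀ a2 ∈ A, ∀ c2 ∈ B, ∀ z : F,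
      -(|a1| * |c1| + |a2| * |c2|) ≤ z → z ≤ |a1| * |c1| + |a2| * |c2| → z ∈ A * B := by
    intro a1 ha1 c1 hc1 a2 ha2 c2 hc2 z h1 h2
    have hM : |a1| * |c1| + |a2| * |c2| ≤ (|a1| + |a2|) * (|c1| + |c2|) := by
      nlinarith [abs_nonneg a1, abs_nonneg a2, abs_nonneg c1, abs_nonneg c2]
    exact key _ (hA.2.1 _ (mag_abs hA ha1) _ (mag_abs hA ha2))
      _ (hB.2.1 _ (mag_abs hB hc1) _ (mag_abs hB hc2)) z (by linarith) (by linarith)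
  refine ⟨⟨0, hA.1, 0, hB.1, by simp⟩, ?_, ?_, ?_⟩
  · rintro _ ⟨a1, ha1, c1, hc1, rfl⟩ _ ⟨a2, ha2, c2, hc2, rfl⟩
    have e1 := neg_abs_le (a1 * c1); have e2 := le_abs_self (a1 * c1)
    have e3 := neg_abs_le (a2 * c2); have e4 := le_abs_self (a2 * c2)
    rw [abs_mul] at e1 e2; rw [abs_mul] at e3 e4
    refine bound a1 ha1 c1 hc1 a2 ha2 c2 hc2 _ ?_ ?_ <;> · beta_reduce; linarith
  · rintro _ ⟨a, ha, c, hc, rfl⟩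
    exact ⟨-a, hA.2.2.1 a ha, c, hc, by ring⟩
  · rintro _ ⟨a1, ha1, c1, hc1, rfl⟩ _ ⟨a2, ha2, c2, hc2, rfl⟩ z h1 h2
    have e1 := neg_abs_le (a1 * c1)
    have e4 := le_abs_self (a2 * c2)
    rw [abs_mul] at e1; rw [abs_mul] at e4
    have p1 : (0:F) ≤ |a1| * |c1| := by positivity
    have p2 : (0:F) ≤ |a2| * |c2| := by positivity
    beta_reduce at h1 h2
    exact bound a1 ha1 c1 hc1 a2 ha2 c2 hc2 z (by linarith) (by linarith)

lemma add_mag {C D : Set F} (hC : IsMagnitude C) (hD : IsMagnitude D) :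
    IsMagnitude (C + D) := by
  refine ⟨⟨0, hC.1, 0, hD.1, by simp⟩, ?_, ?_, ?_⟩
  · rintro _ ⟨c1, hc1, d1, hd1, rfl⟩ _ ⟨c2, hc2, d2, hd2, rfl⟩
    exact ⟨c1 + c2, hC.2.1 _ hc1 _ hc2, d1 + d2, hD.2.1 _ hd1 _ hd2, by ring⟩
  · rintro _ ⟨c, hc, d, hd, rfl⟩
    exact ⟨-c, hC.2.2.1 c hc, -d, hD.2.2.1 d hd, by ring⟩
  · rintro _ ⟨c1, hc1, d1, hd1, rfl⟩ _ ⟨c2, hc2, d2, hd2, rfl⟩ z h1 h2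
    simp only at h1 h2
    set w := z - (c1 + d1) with hw
    have hw0 : 0 ≤ w := by rw [hw]; linarith
    have hwle : w ≤ (c2 - c1) + (d2 - d1) := by rw [hw]; linarith
    have hcC : c2 - c1 ∈ C := mag_sub hC hc2 hc1
    have hdD : d2 - d1 ∈ D := mag_sub hD hd2 hd1
    by_cases hcase : w ≤ |c2 - c1|
    · have hwC : w ∈ C := hC.2.2.2 0 hC.1 _ (mag_abs hC hcC) w hw0 hcase
      exact ⟨c1 + w, hC.2.1 _ hc1 _ hwC, d1, hd1, by rw [hw]; ring⟩
    · push_neg at hcase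
      have h4 : c2 - c1 ≤ |c2 - c1| := le_abs_self _
      have hwd : w - (c2 - c1) ∈ D := by
        refine hD.2.2.2 0 hD.1 _ (mag_abs hD hdD) _ (by linarith) ?_
        have := le_abs_self (d2 - d1); linarith
      refine ⟨c1 + (c2 - c1), hC.2.1 _ hc1 _ hcC,
        d1 + (w - (c2 - c1)), hD.2.1 _ hd1 _ hwd, by rw [hw]; ring⟩

end aux

theorem magnitude_mul_coset_is_magnitude {F : Type*} [Field F] [LinearOrder F] [IsStrictOrderedRing F]
    (A B : Set F) (hA : IsMagnitude A) (hB : IsMagnitude B) (b : F) :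
    IsMagnitude (b • A + A * B) :=
  add_mag (smul_mag hA b) (mul_mag hA hB)
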